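/- Let G₂ be a group and G₁ ≤ G₂ a subgroup of finite index, and let k be a commutative ring. Then the group ring inclusion k[G₁] ⊆ k[G₂] is a free id-Frobenius extension: k[G₂] is free of finite rank as a left and as a right k[G₁]-module, and k[G₂] ≅ Hom_{k[G₁]}(k[G₂], k[G₁]) as (k[G₂], k[G₁])-bimodules. -/

import Mathlib

open MonoidAlgebra

namespace Stmt12Aux

variable {k : Type} [CommRing k] {G₂ : Type} [Group G₂] {G₁ : Subgroup G₂}

/-- Frobenius projection θ : k[G₂] → k[G₁]. -/
noncomputable def theta (k : Type) [CommRing k] (G₁ : Subgroup G₂) :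
    MonoidAlgebra k G₂ →+ MonoidAlgebra k G₁ :=
  MonoidAlgebra.comapDomainAddMonoidHom (Subtype.val : G₁ → G₂) Subtype.coe_injective

@[simp] lemma theta_apply (f : MonoidAlgebra k G₂) (h : G₁) :
    (theta k G₁ f).coeff h = f.coeff ↑h := rfl

noncomputable abbrev ι (k : Type) [CommRing k] (G₁ : Subgroup G₂) :
    MonoidAlgebra k G₁ →+* MonoidAlgebra k G₂ :=
  MonoidAlgebra.mapDomainRingHom k G₁.subtype

lemma iota_single (h : G₁) (c : k) :
    ι k G₁ (MonoidAlgebra.single h c) = MonoidAlgebra.single (↑h : G₂) c := by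
  simp [MonoidAlgebra.mapDomainRingHom, Finsupp.mapDomain_single]

lemma theta_mul_iota (f : MonoidAlgebra k G₂) (c : MonoidAlgebra k G₁) :
    theta k G₁ (f * ι k G₁ c) = theta k G₁ f * c := by
  induction c using MonoidAlgebra.induction_linear with
  | zero => simp
  | add a b ha hb => rw [map_add, mul_add, map_add, mul_add, ha, hb]
  | single a b =>
    rw [iota_single]
    ext h'
    rw [theta_apply, MonoidAlgebra.mul_single_apply, MonoidAlgebra.mul_single_apply,
      theta_apply]
    norm_cast

lemma iota_mul_theta (c : MonoidAlgebra k G₁) (f : MonoidAlgebra k G₂) :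
    theta k G₁ (ι k G₁ c * f) = c * theta k G₁ f := by
  induction c using MonoidAlgebra.induction_linear with
  | zero => simp
  | add a b ha hb => rw [map_add, add_mul, map_add, add_mul, ha, hb]
  | single a b =>
    rw [iota_single]
    ext h'
    rw [theta_apply, MonoidAlgebra.single_mul_apply, MonoidAlgebra.single_mul_apply,
      theta_apply]
    norm_cast

lemma theta_single_of_not_mem {g : G₂} (hg : g ∉ G₁) (c : k) :
    theta k G₁ (MonoidAlgebra.single g c) = 0 := by
  classical
  ext h
  rw [theta_apply]
  simp only [MonoidAlgebra.coeff_zero, Finsupp.coe_zero, Pi.zero_apply]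
  rw [show (MonoidAlgebra.single g c : MonoidAlgebra k G₂).coeff ↑h = _ from Finsupp.single_apply,
    if_neg]
  intro hgh
  exact hg (hgh ▸ h.2)

lemma theta_single_one : theta k G₁ (MonoidAlgebra.single (1 : G₂) (1 : k)) = 1 := by
  classical
  ext h
  rw [theta_apply, MonoidAlgebra.one_def]
  rw [show (MonoidAlgebra.single (1:G₂) (1:k) : MonoidAlgebra k G₂).coeff ↑h = _ from
    Finsupp.single_apply]
  rw [show (MonoidAlgebra.single (1:G₁) (1:k) : MonoidAlgebra k G₁).coeff h = _ from
    Finsupp.single_apply]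
  by_cases hh : (1 : G₁) = h
  · rw [if_pos hh, if_pos (by rw [← hh]; rfl)]
  · rw [if_neg hh, if_neg (fun hc => hh (by exact_mod_cast hc))]

end Stmt12Aux

section Main

open MonoidAlgebra Stmt12Aux

variable {k : Type} [CommRing k] {G₂ : Type} [Group G₂] {G₁ : Subgroup G₂}
variable {n : ℕ} (e : (G₂ ⧸ G₁) ≃ Fin n)

/-- left coset representatives -/
noncomputable def rep (i : Fin n) : G₂ := (e.symm i).out

lemma rep_mem_iff (i j : Fin n) : (rep e i)⁻¹ * rep e j ∈ G₁ ↔ i = j := by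
  rw [← QuotientGroup.eq, rep, rep, QuotientGroup.out_eq', QuotientGroup.out_eq']
  exact ⟨fun h => by simpa using congrArg e h, fun h => by rw [h]⟩

lemma rep_inv_mul_mem_iff (i : Fin n) (g : G₂) :
    (rep e i)⁻¹ * g ∈ G₁ ↔ i = e g := by
  rw [← QuotientGroup.eq, rep, QuotientGroup.out_eq']
  exact ⟨fun h => by simpa using congrArg e h, fun h => by simp [h]⟩

lemma mul_rep_mem_iff (g : G₂) (j : Fin n) :
    g * rep e j ∈ G₁ ↔ j = e (↑g⁻¹ : G₂ ⧸ G₁) := by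
  rw [show g * rep e j ∈ G₁ ↔ (rep e j)⁻¹ * g⁻¹ ∈ G₁ by
    rw [← G₁.inv_mem_iff]; simp [mul_inv_rev]]
  exact rep_inv_mul_mem_iff e j g⁻¹

lemma theta_rep_single (i j : Fin n) :
    theta k G₁ (MonoidAlgebra.single ((rep e i)⁻¹ * rep e j) (1:k)) =
      if i = j then 1 else 0 := by
  by_cases h : i = j
  · subst h; simp only [inv_mul_cancel, if_pos rfl]; exact theta_single_one
  · rw [if_neg h]
    exact theta_single_of_not_mem (fun hc => h ((rep_mem_iff e i j).mp hc)) 1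

/-- coefficient extraction for the left-module decomposition -/
lemma coefL (c : Fin n → MonoidAlgebra k G₁) (j : Fin n) :
    theta k G₁ ((∑ i, ι k G₁ (c i) * MonoidAlgebra.single (rep e i)⁻¹ (1:k)) *
      MonoidAlgebra.single (rep e j) (1:k)) = c j := by
  rw [Finset.sum_mul, map_sum]
  have : ∀ i, theta k G₁ (ι k G₁ (c i) * MonoidAlgebra.single (rep e i)⁻¹ (1:k) *
      MonoidAlgebra.single (rep e j) (1:k)) = c i * (if i = j then 1 else 0) := by
    intro i
    rw [mul_assoc, MonoidAlgebra.single_mul_single, one_mul, iota_mul_theta,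
      theta_rep_single]
  simp only [this]
  simp
-- decomposition, left version
lemma decompL (s : MonoidAlgebra k G₂) :
    s = ∑ i, ι k G₁ (theta k G₁ (s * MonoidAlgebra.single (rep e i) (1:k))) *
      MonoidAlgebra.single (rep e i)⁻¹ (1:k) := by
  classical
  ext g₀
  rw [MonoidAlgebra.coeff_sum, Finsupp.finset_sum_apply]
  have key : ∀ i, (ι k G₁ (theta k G₁ (s * MonoidAlgebra.single (rep e i) (1:k))) *
      MonoidAlgebra.single (rep e i)⁻¹ (1:k)).coeff g₀ =
      if i = e (↑g₀⁻¹ : G₂ ⧸ G₁) then s.coeff g₀ else 0 := by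
    intro i
    rw [MonoidAlgebra.mul_single_apply, inv_inv, mul_one]
    by_cases hi : i = e (↑g₀⁻¹ : G₂ ⧸ G₁)
    · rw [if_pos hi]
      have hmem : g₀ * rep e i ∈ G₁ := (mul_rep_mem_iff e g₀ i).mpr hi
      rw [show g₀ * rep e i = ((⟨g₀ * rep e i, hmem⟩ : G₁) : G₂) from rfl]
      rw [show ((ι k G₁) (theta k G₁ (s * MonoidAlgebra.single (rep e i) (1:k)))).coeff =
        Finsupp.mapDomain (Subtype.val) (theta k G₁ (s * MonoidAlgebra.single (rep e i) (1:k))).coeff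
        from rfl]
      rw [Finsupp.mapDomain_apply Subtype.coe_injective]
      rw [theta_apply, MonoidAlgebra.mul_single_apply]
      simp
    · rw [if_neg hi]
      have hmem : g₀ * rep e i ∉ Set.range (Subtype.val : G₁ → G₂) := by
        rintro ⟨h, hh⟩
        exact hi ((mul_rep_mem_iff e g₀ i).mp (hh ▸ h.2))
      exact Finsupp.mapDomain_notin_range _ _ hmem
  simp only [key]
  simp

/-- coefficient extraction for the right-module decomposition -/
lemma coefR (c : Fin n → MonoidAlgebra k G₁) (j : Fin n) :
    theta k G₁ (MonoidAlgebra.single (rep e j)⁻¹ (1:k) *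
      ∑ i, MonoidAlgebra.single (rep e i) (1:k) * ι k G₁ (c i)) = c j := by
  rw [Finset.mul_sum, map_sum]
  have : ∀ i, theta k G₁ (MonoidAlgebra.single (rep e j)⁻¹ (1:k) *
      (MonoidAlgebra.single (rep e i) (1:k) * ι k G₁ (c i))) =
      (if j = i then 1 else 0) * c i := by
    intro i
    rw [← mul_assoc, MonoidAlgebra.single_mul_single, one_mul, theta_mul_iota,
      theta_rep_single]
  simp only [this]
  simp

-- decomposition, right version
lemma decompR (s : MonoidAlgebra k G₂) :
    s = ∑ i, MonoidAlgebra.single (rep e i) (1:k) *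
      ι k G₁ (theta k G₁ (MonoidAlgebra.single (rep e i)⁻¹ (1:k) * s)) := by
  classical
  ext g₀
  rw [MonoidAlgebra.coeff_sum, Finsupp.finset_sum_apply]
  have key : ∀ i, (MonoidAlgebra.single (rep e i) (1:k) *
      ι k G₁ (theta k G₁ (MonoidAlgebra.single (rep e i)⁻¹ (1:k) * s))).coeff g₀ =
      if i = e (↑g₀ : G₂ ⧸ G₁) then s.coeff g₀ else 0 := by
    intro i
    rw [MonoidAlgebra.single_mul_apply, one_mul]
    by_cases hi : i = e (↑g₀ : G₂ ⧸ G₁)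
    · rw [if_pos hi]
      have hmem : (rep e i)⁻¹ * g₀ ∈ G₁ := (rep_inv_mul_mem_iff e i g₀).mpr hi
      rw [show (rep e i)⁻¹ * g₀ = ((⟨(rep e i)⁻¹ * g₀, hmem⟩ : G₁) : G₂) from rfl]
      rw [show ((ι k G₁) (theta k G₁ (MonoidAlgebra.single (rep e i)⁻¹ (1:k) * s))).coeff =
        Finsupp.mapDomain (Subtype.val)
          (theta k G₁ (MonoidAlgebra.single (rep e i)⁻¹ (1:k) * s)).coeff from rfl]
      rw [Finsupp.mapDomain_apply Subtype.coe_injective]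
      rw [theta_apply, MonoidAlgebra.single_mul_apply]
      simp
    · rw [if_neg hi]
      have hmem : (rep e i)⁻¹ * g₀ ∉ Set.range (Subtype.val : G₁ → G₂) := by
        rintro ⟨h, hh⟩
        exact hi ((rep_inv_mul_mem_iff e i g₀).mp (hh ▸ h.2))
      exact Finsupp.mapDomain_notin_range _ _ hmem
  simp only [key]
  simp

lemma theta_coeff (s : MonoidAlgebra k G₂) (g : G₂) :
    (theta k G₁ (MonoidAlgebra.single g⁻¹ (1:k) * s)).coeff 1 = s.coeff g := by
  rw [show (theta k G₁ (MonoidAlgebra.single g⁻¹ (1:k) * s)).coeff 1 =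
    (MonoidAlgebra.single g⁻¹ (1:k) * s).coeff ((1 : G₁) : G₂) from rfl]
  rw [MonoidAlgebra.single_mul_apply]
  simp

end Main

open MonoidAlgebra Stmt12Aux



/-- let `G₁ ≤ G₂` be a subgroup of finite index and `k` a commutative ring.
Then `k[G₁] ⊆ k[G₂]` is a free `id`-Frobenius extension: `k[G₂]` is free of finite rank as a
left and as a right `k[G₁]`-module, and `k[G₂] ≅ Hom_{k[G₁]}(k[G₂], k[G₁])` as
`(k[G₂], k[G₁])`-bimodules. -/
theorem stmt12 (k : Type) [CommRing k] (G₂ : Type) [Group G₂] (G₁ : Subgroup G₂)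
    (hfin : G₁.index ≠ 0) :
    ∃ (n : ℕ) (x y : Fin n → MonoidAlgebra k G₂),
      (∀ s : MonoidAlgebra k G₂, ∃! c : Fin n → MonoidAlgebra k G₁,
        s = ∑ i, (MonoidAlgebra.mapDomainRingHom k G₁.subtype) (c i) * x i) ∧
      (∀ s : MonoidAlgebra k G₂, ∃! c : Fin n → MonoidAlgebra k G₁,
        s = ∑ i, y i * (MonoidAlgebra.mapDomainRingHom k G₁.subtype) (c i)) ∧
      ∃ Φ : MonoidAlgebra k G₂ → (MonoidAlgebra k G₂ →+ MonoidAlgebra k G₁),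
        (∀ (s : MonoidAlgebra k G₂) (r : MonoidAlgebra k G₁) (t : MonoidAlgebra k G₂),
          Φ s ((MonoidAlgebra.mapDomainRingHom k G₁.subtype) r * t) = r * Φ s t) ∧
        (∀ ψ : MonoidAlgebra k G₂ →+ MonoidAlgebra k G₁,
          (∀ (r : MonoidAlgebra k G₁) (t : MonoidAlgebra k G₂),
            ψ ((MonoidAlgebra.mapDomainRingHom k G₁.subtype) r * t) = r * ψ t) →
          ∃! s : MonoidAlgebra k G₂, Φ s = ψ) ∧
        (∀ s t : MonoidAlgebra k G₂, Φ (s + t) = Φ s + Φ t) ∧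
        (∀ s t u : MonoidAlgebra k G₂, Φ (t * s) u = Φ s (u * t)) ∧
        (∀ (s : MonoidAlgebra k G₂) (r : MonoidAlgebra k G₁) (u : MonoidAlgebra k G₂),
          Φ (s * (MonoidAlgebra.mapDomainRingHom k G₁.subtype) r) u = Φ s u * r) := by
  classical
  haveI hfinite : Finite (G₂ ⧸ G₁) := Nat.finite_of_card_ne_zero hfin
  let e : (G₂ ⧸ G₁) ≃ Fin G₁.index := Finite.equivFinOfCardEq rfl
  refine ⟨G₁.index, fun i => MonoidAlgebra.single (rep e i)⁻¹ (1:k),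
    fun i => MonoidAlgebra.single (rep e i) (1:k), ?_, ?_, ?_⟩
  · -- left free
    intro s
    refine ⟨fun i => theta k G₁ (s * MonoidAlgebra.single (rep e i) (1:k)),
      decompL e s, ?_⟩
    intro c hc
    funext j
    rw [hc]
    exact (coefL e c j).symm
  · -- right free
    intro s
    refine ⟨fun i => theta k G₁ (MonoidAlgebra.single (rep e i)⁻¹ (1:k) * s),
      decompR e s, ?_⟩
    intro c hc
    funext j
    rw [hc]
    exact (coefR e c j).symm
  · -- Frobenius form
    refine ⟨fun s => (theta k G₁).comp (AddMonoidHom.mulRight s), ?_, ?_, ?_, ?_, ?_⟩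
    · intro s r t
      show theta k G₁ (ι k G₁ r * t * s) = r * theta k G₁ (t * s)
      rw [mul_assoc]
      exact iota_mul_theta r (t * s)
    · intro ψ hψ
      set s₀ : MonoidAlgebra k G₂ := ∑ j, MonoidAlgebra.single (rep e j) (1:k) *
        ι k G₁ (ψ (MonoidAlgebra.single (rep e j)⁻¹ (1:k))) with hs₀
      have key : ∀ i, theta k G₁ (MonoidAlgebra.single (rep e i)⁻¹ (1:k) * s₀) =
          ψ (MonoidAlgebra.single (rep e i)⁻¹ (1:k)) := fun i =>
        coefR e (fun j => ψ (MonoidAlgebra.single (rep e j)⁻¹ (1:k))) i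
      have hΦs₀ : ((theta k G₁).comp (AddMonoidHom.mulRight s₀)) = ψ := by
        refine AddMonoidHom.ext fun t => ?_
        simp only [AddMonoidHom.comp_apply, AddMonoidHom.mulRight_apply]
        conv_lhs => rw [decompL e t]
        conv_rhs => rw [decompL e t]
        rw [Finset.sum_mul, map_sum, map_sum]
        refine Finset.sum_congr rfl fun i _ => ?_
        rw [mul_assoc, iota_mul_theta, key, hψ]
      refine ⟨s₀, hΦs₀, ?_⟩
      intro s₁ hs₁
      ext g
      have h1 : s₁.coeff g = (theta k G₁ (MonoidAlgebra.single g⁻¹ (1:k) * s₁)).coeff 1 :=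
        (theta_coeff s₁ g).symm
      have h2 : s₀.coeff g = (theta k G₁ (MonoidAlgebra.single g⁻¹ (1:k) * s₀)).coeff 1 :=
        (theta_coeff s₀ g).symm
      rw [h1, h2]
      have := congrArg (fun χ : MonoidAlgebra k G₂ →+ MonoidAlgebra k G₁ =>
        χ (MonoidAlgebra.single g⁻¹ (1:k))) (hs₁.trans hΦs₀.symm)
      simp only [AddMonoidHom.comp_apply, AddMonoidHom.mulRight_apply] at this
      rw [this]
    · intro s t
      ext u
      simp only [AddMonoidHom.comp_apply, AddMonoidHom.mulRight_apply,
        AddMonoidHom.add_apply]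
      rw [mul_add, map_add]
    · intro s t u
      show theta k G₁ (u * (t * s)) = theta k G₁ (u * t * s)
      rw [mul_assoc]
    · intro s r u
      show theta k G₁ (u * (s * ι k G₁ r)) = theta k G₁ (u * s) * r
      rw [← mul_assoc, theta_mul_iota]
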